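/- Let c be a nonzero integer with c ≡ 1 (mod 4) and let f(z) = z² + 1/c ∈ ℚ[z]. Then for every n ≥ 1 the n-th iterate fⁿ(z) is irreducible over ℚ. -/

import Mathlib

open Polynomial

set_option synthInstance.maxHeartbeats 1000000
set_option maxHeartbeats 1000000


theorem capelli (g : ℚ[X]) (hg : g.Monic) (hirr : Irreducible g) (hd : Even g.natDegree)
    (a : ℚ) (hns : ¬ IsSquare (g.eval a)) :
    Irreducible (g.comp (X ^ 2 + C a)) := by
  set f : ℚ[X] := X ^ 2 + C a with hfdef
  have hfm : f.Monic := by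
    apply Polynomial.monic_X_pow_add_C a (by norm_num)
  have hfdeg : f.natDegree = 2 := Polynomial.natDegree_X_pow_add_C
  have hgfm : (g.comp f).Monic := hg.comp hfm (by rw [hfdeg]; norm_num)
  have hd0 : 0 < g.natDegree := hirr.natDegree_pos
  set d := g.natDegree with hddef
  have hgfdeg : (g.comp f).natDegree = d * 2 := by rw [natDegree_comp, hfdeg]
  -- a monic irreducible factor
  obtain ⟨h0, h0irr, h0dvd⟩ := WfDvdMonoid.exists_irreducible_factor
    (fun hu => by
      have := Polynomial.natDegree_eq_zero_of_isUnit hu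
      omega)
    hgfm.ne_zero
  have hne0 : h0 ≠ 0 := h0irr.ne_zero
  set h : ℚ[X] := normalize h0 with hhdef
  have hhm : h.Monic := Polynomial.monic_normalize hne0
  have hhirr : Irreducible h := (normalize_associated h0).symm.irreducible h0irr  -- fix later
  have hhdvd : h ∣ g.comp f := (normalize_dvd_iff).mpr h0dvd
  have hhne : h ≠ 0 := hhm.ne_zero
  have hhdegle : h.natDegree ≤ d * 2 := by
    rw [← hgfdeg]; exact Polynomial.natDegree_le_of_dvd hhdvd hgfm.ne_zero
  have hhdegpos : 0 < h.natDegree := hhirr.natDegree_pos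
  -- key: h has degree d * 2
  have key : h.natDegree = d * 2 := by
    by_contra hkey
    haveI : Fact (Irreducible h) := ⟨hhirr⟩
    set L := AdjoinRoot h with hLdef
    set θ : L := AdjoinRoot.root h with hθdef
    haveI : FiniteDimensional ℚ L := (AdjoinRoot.powerBasis hhne).finite
    have hrankL : Module.finrank ℚ L = h.natDegree := by
      rw [(AdjoinRoot.powerBasis hhne).finrank, AdjoinRoot.powerBasis_dim]
    have haeval : aeval θ (g.comp f) = 0 := by
      obtain ⟨k, hk⟩ := hhdvd
      rw [hk, map_mul, hθdef]; erw [AdjoinRoot.aeval_eq, AdjoinRoot.mk_self, zero_mul]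
    set β : L := aeval θ f with hβdef
    have hβg : aeval β g = 0 := by
      rw [hβdef, ← aeval_comp]; exact haeval
    have hβint : IsIntegral ℚ β := IsIntegral.of_finite ℚ β
    have hmin : minpoly ℚ β = g := (minpoly.eq_of_irreducible_of_monic hirr hβg hg).symm
    -- tower
    set M := IntermediateField.adjoin ℚ ({β} : Set L) with hMdef
    have hMrank : Module.finrank ℚ M = d := by
      rw [IntermediateField.adjoin.finrank hβint, hmin]
    have htower : Module.finrank ℚ M * Module.finrank M L = Module.finrank ℚ L :=
      Module.finrank_mul_finrank ℚ M L
    have hr1 : 0 < Module.finrank M L := Module.finrank_pos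
    have hr : Module.finrank M L = 1 := by
      rw [hMrank, hrankL] at htower
      rcases Nat.lt_or_ge (Module.finrank M L) 3 with h3 | h3
      · interval_cases (Module.finrank M L) <;> omega
      · nlinarith
    -- so finrank ℚ L = d
    have hLd : Module.finrank ℚ L = d := by rw [← htower, hr, hMrank, mul_one]
    -- subalgebra adjoin β is everything
    have hβtop : Algebra.adjoin ℚ ({β} : Set L) = ⊤ := by
      have hfr : Module.finrank ℚ (Algebra.adjoin ℚ ({β} : Set L)) = d := by
        rw [(Algebra.adjoin.powerBasis hβint).finrank, Algebra.adjoin.powerBasis_dim, hmin]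
      rw [← Algebra.toSubmodule_eq_top]
      apply Submodule.eq_top_of_finrank_eq
      rw [Subalgebra.finrank_toSubmodule, hfr, hLd]
    have hx2 : θ ^ 2 = β - algebraMap ℚ L a := by
      simp only [hβdef, hfdef, map_add, map_pow, aeval_X, aeval_C]; ring
    have hx2top : Algebra.adjoin ℚ ({θ ^ 2} : Set L) = ⊤ := by
      rw [eq_top_iff, ← hβtop]
      apply Algebra.adjoin_le
      intro x hx
      rw [Set.mem_singleton_iff] at hx
      subst hx
      have h1 : θ ^ 2 ∈ Algebra.adjoin ℚ ({θ ^ 2} : Set L) :=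
        Algebra.subset_adjoin (Set.mem_singleton _)
      have h2 : algebraMap ℚ L a ∈ Algebra.adjoin ℚ ({θ ^ 2} : Set L) :=
        Subalgebra.algebraMap_mem _ a
      have : β = θ ^ 2 + algebraMap ℚ L a := by rw [hx2]; ring
      rw [this]
      exact Subalgebra.add_mem _ h1 h2
    have hx2int : IsIntegral ℚ (θ ^ 2) := IsIntegral.of_finite ℚ _
    -- power basis with generator θ^2
    let pb2 : PowerBasis ℚ L := (PowerBasis.ofAdjoinEqTop hx2int
      hx2top)
    have hgen : pb2.gen = θ ^ 2 := by
      simp [pb2, PowerBasis.ofAdjoinEqTop_gen]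
    have hminx2 : minpoly ℚ (θ ^ 2) = g.comp (X + C a) := by
      rw [hx2, minpoly.sub_algebraMap, hmin]
    have hdim : pb2.dim = d := by
      have := pb2.finrank
      rw [hLd] at this; omega
    have hnorm : Algebra.norm ℚ (θ ^ 2) = g.eval a := by
      have := Algebra.PowerBasis.norm_gen_eq_coeff_zero_minpoly pb2
      rw [hgen, hminx2, hdim] at this
      rw [this, hd.neg_one_pow, one_mul, coeff_zero_eq_eval_zero]
      simp [eval_comp]
    apply hns
    refine ⟨Algebra.norm ℚ θ, ?_⟩
    rw [← hnorm, map_pow, sq]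
  -- conclude
  obtain ⟨k, hk⟩ := hhdvd
  have hkm : k.Monic := hhm.of_mul_monic_left (hk ▸ hgfm)
  have hkdeg : k.natDegree = 0 := by
    have := hgfm.ne_zero
    have hdeg : (g.comp f).natDegree = h.natDegree + k.natDegree := by
      rw [hk]; exact Polynomial.natDegree_mul hhm.ne_zero hkm.ne_zero
    omega
  have hk1 : k = 1 := hkm.natDegree_eq_zero.mp hkdeg
  rw [hk, hk1, mul_one]
  exact hhirr


private def sseq (c : ℤ) : ℕ → ℤ
  | 0 => 1
  | (k+1) => (sseq c k)^2 + c ^ (2^(k+1) - 1)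

private lemma sseq_succ (c : ℤ) (k : ℕ) :
    sseq c (k+1) = (sseq c k)^2 + c ^ (2^(k+1) - 1) := rfl

private lemma sseq_pos {c : ℤ} (hc : 0 < c) (k : ℕ) : 0 < sseq c k := by
  induction k with
  | zero => norm_num [sseq]
  | succ k ih =>
    rw [sseq_succ]
    have : 0 < c ^ (2^(k+1) - 1) := pow_pos hc _
    positivity

private lemma sseq_sub_one_dvd {c : ℤ} (d : ℤ) (hd : d ∣ c) (k : ℕ) :
    d ∣ sseq c k - 1 := by
  induction k with
  | zero => simp [sseq]
  | succ k ih =>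
    rw [sseq_succ]
    have h1 : d ∣ c ^ (2^(k+1) - 1) := by
      apply dvd_pow hd
      have : 2 ≤ 2^(k+1) := by
        have := Nat.one_lt_two_pow_iff.mpr (Nat.succ_ne_zero k)
        omega
      omega
    have h2 : (sseq c k)^2 + c ^ (2^(k+1) - 1) - 1
        = (sseq c k - 1) * (sseq c k + 1) + c ^ (2^(k+1) - 1) := by ring
    rw [h2]
    exact dvd_add (Dvd.dvd.mul_right ih _) h1

private lemma pow_mod_gen {c : ℤ} {n r : ℤ} (h : c % n = r % n) (m : ℕ) :
    c ^ m % n = r ^ m % n := Int.ModEq.pow m h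

private lemma sseq_parity {c : ℤ} (hc4 : c % 4 = 1) (k : ℕ) :
    sseq c (2*k) % 2 = 1 ∧ sseq c (2*k+1) % 4 = 2 := by
  have hc2 : c % 2 = 1 := by omega
  induction k with
  | zero =>
    refine ⟨by simp [sseq], ?_⟩
    have : sseq c (2*0+1) = 1 + c ^ (2^1 - 1) := by
      rw [show 2*0+1 = 0+1 by rfl, sseq_succ]; simp [sseq]
    rw [this]; simp; omega
  | succ k ih =>
    obtain ⟨ih1, ih2⟩ := ih
    have e1 : 2*(k+1) = (2*k+1)+1 := by ring
    have hp2 : c ^ (2^((2*k+1)+1) - 1) % 2 = 1 := by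
      rw [pow_mod_gen (show c % 2 = 1 % 2 by omega)]; simp
    have hp4 : c ^ (2^((2*(k+1))+1) - 1) % 4 = 1 := by
      rw [pow_mod_gen (show c % 4 = 1 % 4 by omega)]; norm_num
    have h1 : sseq c (2*(k+1)) % 2 = 1 := by
      rw [e1, sseq_succ, Int.add_emod, sq, Int.mul_emod]
      have : sseq c (2*k+1) % 2 = 0 := by omega
      rw [this, hp2]; norm_num
    refine ⟨h1, ?_⟩
    rw [show 2*(k+1)+1 = (2*(k+1))+1 by rfl, sseq_succ, Int.add_emod, sq, Int.mul_emod]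
    have h4 : sseq c (2*(k+1)) % 4 = 1 ∨ sseq c (2*(k+1)) % 4 = 3 := by omega
    rcases h4 with h4 | h4 <;> rw [h4, hp4] <;> norm_num

private lemma not_isSquare_of_mod4 {z : ℤ} (h : z % 4 = 2 ∨ z % 4 = 3) : ¬ IsSquare z := by
  rintro ⟨r, rfl⟩
  have h2 : r * r % 4 = (r % 4) * (r % 4) % 4 := Int.mul_emod r r 4
  have h1 : r % 4 = 0 ∨ r % 4 = 1 ∨ r % 4 = 2 ∨ r % 4 = 3 := by omega
  rcases h1 with h1|h1|h1|h1 <;> rw [h1] at h2 <;> norm_num at h2 <;> omega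

private lemma not_isSquare_of_mod8_5 {z : ℤ} (h : z % 8 = 5) : ¬ IsSquare z := by
  rintro ⟨r, rfl⟩
  have h2 : r * r % 8 = (r % 8) * (r % 8) % 8 := Int.mul_emod r r 8
  have h1 : r % 8 = 0 ∨ r % 8 = 1 ∨ r % 8 = 2 ∨ r % 8 = 3 ∨ r % 8 = 4 ∨ r % 8 = 5
      ∨ r % 8 = 6 ∨ r % 8 = 7 := by omega
  rcases h1 with h1|h1|h1|h1|h1|h1|h1|h1 <;> rw [h1] at h2 <;> norm_num at h2 <;> omega

private lemma sseq_mod8 {c : ℤ} (hc4 : c % 4 = 1) (hc8 : c % 8 = 1) (k : ℕ) :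
    sseq c (2*k+2) % 8 = 5 := by
  have h2 := (sseq_parity hc4 k).2
  rw [show 2*k+2 = (2*k+1)+1 by rfl, sseq_succ]
  have hp8 : c ^ (2^((2*k+1)+1) - 1) % 8 = 1 := by
    rw [pow_mod_gen (show c % 8 = 1 % 8 by omega)]; norm_num
  have hsq : sseq c (2*k+1) ^ 2 % 8 = 4 := by
    rw [sq, Int.mul_emod]
    have : sseq c (2*k+1) % 8 = 2 ∨ sseq c (2*k+1) % 8 = 6 := by omega
    rcases this with h|h <;> rw [h] <;> norm_num
  rw [Int.add_emod, hsq, hp8]; norm_num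

private lemma chi_contra {Dn qn : ℕ} (hD : Dn % 2 = 1) (hq : qn % 2 = 1)
    (h58 : (Dn * qn) % 8 = 5)
    (heq : (ZMod.χ₈ (Dn : ZMod 8)) = (-1:ℤ)^(qn/2 * (Dn/2)) * ZMod.χ₈' (qn : ZMod 8)) :
    False := by
  rw [ZMod.χ₈_nat_eq_if_mod_eight, ZMod.χ₈'_nat_eq_if_mod_eight,
    neg_one_pow_eq_pow_mod_two, Nat.mul_mod (qn/2) (Dn/2) 2] at heq
  have h58' : (Dn % 8) * (qn % 8) % 8 = 5 := by rw [← Nat.mul_mod]; exact h58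
  have hD8 : Dn % 8 = 1 ∨ Dn % 8 = 3 ∨ Dn % 8 = 5 ∨ Dn % 8 = 7 := by omega
  have hq8 : qn % 8 = 1 ∨ qn % 8 = 3 ∨ qn % 8 = 5 ∨ qn % 8 = 7 := by omega
  have hD2 : Dn/2 % 2 = (Dn % 8)/2 % 2 := by omega
  have hq2 : qn/2 % 2 = (qn % 8)/2 % 2 := by omega
  rw [hD2, hq2] at heq
  rcases hD8 with h|h|h|h <;> rcases hq8 with h'|h'|h'|h' <;>
      rw [h, h'] at heq h58' <;>
    first
      | omega
      | norm_num [hD, hq] at heq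

private lemma jacobi_nonsquare {c : ℤ} (hc : 0 < c) (hc8 : c % 8 = 5) (m : ℕ) :
    ¬ IsSquare (sseq c (2*m+2)) := by
  have hc4 : c % 4 = 1 := by omega
  rintro ⟨t0, ht0⟩
  set S := sseq c (2*m+1) with hS
  set e := 2^(2*m+2) - 1 with he
  -- exponent facts
  have hpow2 : 2^(2*m+2) = 2^(2*m+1) * 2 := pow_succ 2 (2*m+1)
  have hpow2' : (2:ℕ) ≤ 2^(2*m+1) := by
    calc (2:ℕ) = 2^1 := rfl
    _ ≤ 2^(2*m+1) := Nat.pow_le_pow_right (by norm_num) (by omega)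
  have he0 : e ≠ 0 := by omega
  have heodd : Odd e := by rw [Nat.odd_iff]; omega
  have hsdef : sseq c (2*m+2) = S^2 + c^e := sseq_succ c (2*m+1)
  have hSpos : 0 < S := sseq_pos hc _
  have hS4 : S % 4 = 2 := (sseq_parity hc4 m).2
  have hsodd : sseq c (2*m+2) % 2 = 1 := by
    have := (sseq_parity hc4 (m+1)).1
    rw [show 2*(m+1) = 2*m+2 by ring] at this; exact this
  set t := |t0| with htdef
  have ht : sseq c (2*m+2) = t * t := by rw [ht0, htdef, abs_mul_abs_self]
  have htpos : 0 ≤ t := abs_nonneg t0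
  have hcepos : 0 < c ^ e := pow_pos hc e
  have htodd : t % 2 = 1 := by
    have h2 : t * t % 2 = (t%2) * (t%2) % 2 := Int.mul_emod t t 2
    have : t % 2 = 0 ∨ t % 2 = 1 := by omega
    rcases this with h|h <;> rw [h] at h2 <;> norm_num at h2 <;> omega
  have htS : S < t := by nlinarith
  set u := t - S with hu
  set v := t + S with hv
  have huv : u * v = c ^ e := by
    have h1 : u * v = t * t - S^2 := by ring
    rw [h1, ← ht, hsdef]; ring
  have hu0 : 0 < u := by omega
  have hv0 : 0 < v := by omega
  have huodd : u % 2 = 1 := by omega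
  have hvodd : v % 2 = 1 := by omega
  -- coprimality of u and v
  have hgcd : Int.gcd u v = 1 := by
    by_contra hne
    obtain ⟨p, hp, hpdvd⟩ := Nat.exists_prime_and_dvd hne
    have hpu : (p:ℤ) ∣ u :=
      dvd_trans (Int.natCast_dvd_natCast.mpr hpdvd) (Int.gcd_dvd_left u v)
    have hpv : (p:ℤ) ∣ v :=
      dvd_trans (Int.natCast_dvd_natCast.mpr hpdvd) (Int.gcd_dvd_right u v)
    have hpprime : Prime (p:ℤ) := Nat.prime_iff_prime_int.mp hp
    have hp2 : p ≠ 2 := by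
      rintro rfl
      obtain ⟨w, hw⟩ := hpu
      push_cast at hw
      omega
    have hdvd2S : (p:ℤ) ∣ 2*S := by
      have h1 : (p:ℤ) ∣ v - u := dvd_sub hpv hpu
      rwa [show v - u = 2*S by ring] at h1
    have hpS : (p:ℤ) ∣ S := by
      rcases hpprime.dvd_mul.mp hdvd2S with h1 | h1
      · exfalso
        have : (p:ℤ) ∣ 2 := h1
        have hple : (p:ℤ) ≤ 2 := Int.le_of_dvd (by norm_num) this
        have : 2 ≤ p := hp.two_le
        omega
      · exact h1
    have hpc : (p:ℤ) ∣ c := by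
      apply hpprime.dvd_of_dvd_pow (n := e)
      rw [← huv]
      exact Dvd.dvd.mul_right hpu v
    have hpS1 : (p:ℤ) ∣ S - 1 := sseq_sub_one_dvd (p:ℤ) hpc (2*m+1)
    have hp1 : (p:ℤ) ∣ 1 := by
      have := dvd_sub hpS hpS1
      simpa using this
    have := Int.le_of_dvd (by norm_num) hp1
    have := hp.two_le
    omega
  have hcop : IsCoprime u v := Int.isCoprime_iff_gcd_eq_one.mpr hgcd
  -- factor u = D^e, v = q^e
  obtain ⟨D0, hD0⟩ := exists_associated_pow_of_mul_eq_pow' hcop huv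
  rw [Int.associated_iff] at hD0
  obtain ⟨D, hDe⟩ : ∃ D : ℤ, D^e = u := by
    rcases hD0 with h|h
    · exact ⟨D0, h⟩
    · exact ⟨-D0, by rw [Odd.neg_pow heodd]; omega⟩
  obtain ⟨q0, hq0⟩ := exists_associated_pow_of_mul_eq_pow' hcop.symm
    (by rw [mul_comm]; exact huv)
  rw [Int.associated_iff] at hq0
  obtain ⟨q, hqe⟩ : ∃ q : ℤ, q^e = v := by
    rcases hq0 with h|h
    · exact ⟨q0, h⟩
    · exact ⟨-q0, by rw [Odd.neg_pow heodd]; omega⟩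
  have hDpos : 0 < D := (heodd.pow_pos_iff).mp (hDe ▸ hu0)
  have hqpos : 0 < q := (heodd.pow_pos_iff).mp (hqe ▸ hv0)
  have hDq : D * q = c := by
    have h1 : (D*q)^e = c^e := by rw [mul_pow, hDe, hqe, huv]
    exact (heodd.strictMono_pow (R := ℤ)).injective h1
  have hDdvdc : D ∣ c := ⟨q, hDq.symm⟩
  have hqdvdc : q ∣ c := ⟨D, by rw [mul_comm, hDq]⟩
  have hDodd : D % 2 = 1 := by
    have h2 : D % 2 = 0 ∨ D % 2 = 1 := by omega
    rcases h2 with h2|h2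
    · exfalso
      obtain ⟨w, hw⟩ := hDdvdc
      have : c % 2 = 1 := by omega
      have hD2 : (2:ℤ) ∣ D := by omega
      have : (2:ℤ) ∣ c := hw ▸ Dvd.dvd.mul_right hD2 w
      omega
    · exact h2
  have hqodd : q % 2 = 1 := by
    have h2 : q % 2 = 0 ∨ q % 2 = 1 := by omega
    rcases h2 with h2|h2
    · exfalso
      obtain ⟨w, hw⟩ := hqdvdc
      have : c % 2 = 1 := by omega
      have hq2 : (2:ℤ) ∣ q := by omega
      have : (2:ℤ) ∣ c := hw ▸ Dvd.dvd.mul_right hq2 w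
      omega
    · exact h2
  -- congruences
  have hSD : D ∣ S - 1 := sseq_sub_one_dvd D hDdvdc (2*m+1)
  have hSq : q ∣ S - 1 := sseq_sub_one_dvd q hqdvdc (2*m+1)
  have hcongD : D ∣ q^e - 2 := by
    have h1 : q^e - 2 = D^e + 2*(S-1) := by rw [hDe, hqe]; ring
    rw [h1]
    exact dvd_add (dvd_pow_self D he0) (Dvd.dvd.mul_left hSD 2)
  have hcongq : q ∣ D^e + 2 := by
    have h1 : D^e + 2 = q^e - 2*(S-1) := by rw [hDe, hqe]; ring
    rw [h1]
    exact dvd_sub (dvd_pow_self q he0) (Dvd.dvd.mul_left hSq 2)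
  -- coprimality of D and q
  have hcopDq : IsCoprime D q := by
    have h1 : IsCoprime (D^e) (q^e) := by rw [hDe, hqe]; exact hcop
    exact IsCoprime.of_isCoprime_of_dvd_right
      (IsCoprime.of_isCoprime_of_dvd_left h1 (dvd_pow_self D he0)) (dvd_pow_self q he0)
  -- to naturals
  set Dn := D.toNat with hDn
  set qn := q.toNat with hqn
  have hDnc : (Dn:ℤ) = D := Int.toNat_of_nonneg hDpos.le
  have hqnc : (qn:ℤ) = q := Int.toNat_of_nonneg hqpos.le
  have hDnodd : Odd Dn := by rw [Nat.odd_iff]; omega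
  have hqnodd : Odd qn := by rw [Nat.odd_iff]; omega
  -- jacobi symbol computations
  have hgcdqD : Int.gcd q Dn = 1 := by
    rw [hDnc]
    exact Int.isCoprime_iff_gcd_eq_one.mp hcopDq.symm
  have hgcdDq : Int.gcd D qn = 1 := by
    rw [hqnc]
    exact Int.isCoprime_iff_gcd_eq_one.mp hcopDq
  have hmod1 : q^e % (Dn:ℤ) = 2 % (Dn:ℤ) := by
    rw [hDnc]
    have h0 : (2:ℤ) ≡ q^e [ZMOD D] := Int.modEq_iff_dvd.mpr hcongD
    exact h0.symm
  have hmod2 : D^e % (qn:ℤ) = (-2) % (qn:ℤ) := by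
    rw [hqnc]
    have h0 : (-2:ℤ) ≡ D^e [ZMOD q] := Int.modEq_iff_dvd.mpr (by simpa using hcongq)
    exact h0.symm
  have hA : jacobiSym q Dn = ZMod.χ₈ (Dn : ZMod 8) := by
    have h1 : jacobiSym (q^e) Dn = jacobiSym 2 Dn := jacobiSym.mod_left' hmod1
    rw [jacobiSym.pow_left] at h1
    have h2 := jacobiSym.eq_one_or_neg_one hgcdqD
    have h3 : jacobiSym q Dn ^ e = jacobiSym q Dn := by
      rcases h2 with h2|h2 <;> rw [h2] <;> simp [heodd.neg_one_pow]
    rw [h3] at h1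
    rw [h1, jacobiSym.at_two hDnodd]
  have hB : jacobiSym D qn = ZMod.χ₈' (qn : ZMod 8) := by
    have h1 : jacobiSym (D^e) qn = jacobiSym (-2) qn := jacobiSym.mod_left' hmod2
    rw [jacobiSym.pow_left] at h1
    have h2 := jacobiSym.eq_one_or_neg_one hgcdDq
    have h3 : jacobiSym D qn ^ e = jacobiSym D qn := by
      rcases h2 with h2|h2 <;> rw [h2] <;> simp [heodd.neg_one_pow]
    rw [h3] at h1
    rw [h1, jacobiSym.at_neg_two hqnodd]
  have hrec := jacobiSym.quadratic_reciprocity hqnodd hDnodd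
  rw [hqnc] at hrec
  rw [hDnc] at hrec
  rw [hA, hB] at hrec
  -- final contradiction
  have hDn2 : Dn % 2 = 1 := Nat.odd_iff.mp hDnodd
  have hqn2 : qn % 2 = 1 := Nat.odd_iff.mp hqnodd
  have h58 : (Dn * qn) % 8 = 5 := by
    have h1 : ((Dn * qn : ℕ) : ℤ) = c := by push_cast [hDnc, hqnc]; exact hDq
    omega
  exact chi_contra hDn2 hqn2 h58 hrec

private lemma sseq_not_square {c : ℤ} (hc : 0 < c) (hc4 : c % 4 = 1) (k : ℕ) (hk : 1 ≤ k) :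
    ¬ IsSquare (sseq c k) := by
  rcases Nat.even_or_odd k with ⟨j, hj⟩ | ⟨j, hj⟩
  · have hj1 : 1 ≤ j := by omega
    have hk' : k = 2*(j-1)+2 := by omega
    have hc8 : c % 8 = 1 ∨ c % 8 = 5 := by omega
    rcases hc8 with h8|h8
    · rw [hk']; exact not_isSquare_of_mod8_5 (sseq_mod8 hc4 h8 (j-1))
    · rw [hk']; exact jacobi_nonsquare hc h8 (j-1)
  · rw [hj]
    exact not_isSquare_of_mod4 (Or.inl (sseq_parity hc4 j).2)

private lemma int_isSquare_of_rat {m : ℤ} (h : IsSquare ((m:ℚ))) : IsSquare m := by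
  obtain ⟨r, hr⟩ := h
  exact ⟨r.num, by rw [← Rat.num_intCast m, hr, Rat.mul_self_num]⟩

private lemma bq_rec {c : ℤ} (hc0 : c ≠ 0) (k : ℕ) :
    (sseq c (k+1) : ℚ) / (c:ℚ)^(2^(k+1))
      = ((sseq c k : ℚ)/(c:ℚ)^(2^k))^2 + 1/(c:ℚ) := by
  have hcq : (c:ℚ) ≠ 0 := Int.cast_ne_zero.mpr hc0
  have hp : (c:ℚ)^(2^(k+1)) = ((c:ℚ)^(2^k))^2 := by
    rw [pow_succ 2 k, pow_mul]
  have hc' : (c:ℚ)^(2^(k+1)) = (c:ℚ)^(2^(k+1)-1) * c := by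
    rw [← pow_succ]
    congr 1
    have : 1 ≤ 2^(k+1) := Nat.one_le_two_pow
    omega
  rw [sseq_succ]
  push_cast
  rw [add_div]
  congr 1
  · rw [div_pow, hp]
  · rw [hc', div_mul_eq_div_div, div_self (pow_ne_zero _ hcq)]

private lemma bq_neg_bounds {c : ℤ} (hneg : c < 0) (hc4 : c % 4 = 1) (k : ℕ) :
    (sseq c k : ℚ) / (c:ℚ)^(2^k) < 0 ∧ (1:ℚ)/(c:ℚ) ≤ (sseq c k : ℚ) / (c:ℚ)^(2^k) := by
  have hc3 : c ≤ -3 := by omega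
  have hcq : (c:ℚ) ≤ -3 := by exact_mod_cast hc3
  have hc0 : (c:ℚ) ≠ 0 := by intro h; rw [h] at hcq; norm_num at hcq
  have hc0' : c ≠ 0 := by omega
  have ha1 : -(1/3) ≤ (1:ℚ)/c := by
    have h1 : (0:ℚ) ≤ (3 + c) / (3 * c) := by
      apply div_nonneg_iff.mpr
      right
      constructor <;> linarith
    have h2 : (3 + (c:ℚ)) / (3 * c) = 1/3 + 1/c := by
      field_simp
      ring
    linarith [h2 ▸ h1]
  have ha0 : (1:ℚ)/c < 0 := div_neg_of_pos_of_neg one_pos (by linarith)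
  induction k with
  | zero =>
    have : (sseq c 0 : ℚ) / (c:ℚ)^(2^0) = 1/(c:ℚ) := by
      norm_num [sseq]
    rw [this]
    exact ⟨ha0, le_refl _⟩
  | succ k ih =>
    obtain ⟨ih1, ih2⟩ := ih
    rw [bq_rec hc0' k]
    set x := (sseq c k : ℚ) / (c:ℚ)^(2^k) with hx
    set a := (1:ℚ)/(c:ℚ) with ha
    constructor
    · nlinarith [mul_nonneg (by linarith : (0:ℚ) ≤ x - a) (by linarith : (0:ℚ) ≤ -a - x)]
    · nlinarith [sq_nonneg x]

private lemma bq_not_square {c : ℤ} (hc0 : c ≠ 0) (hc4 : c % 4 = 1) (k : ℕ) (hk : 1 ≤ k) :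
    ¬ IsSquare ((sseq c k : ℚ) / (c:ℚ)^(2^k)) := by
  have hcq : (c:ℚ) ≠ 0 := Int.cast_ne_zero.mpr hc0
  rcases lt_or_gt_of_ne hc0 with hneg | hpos
  · intro hsq
    obtain ⟨r, hr⟩ := hsq
    have h1 : 0 ≤ (sseq c k : ℚ) / (c:ℚ)^(2^k) := hr ▸ mul_self_nonneg r
    have h2 := (bq_neg_bounds hneg hc4 k).1
    linarith
  · intro hsq
    apply sseq_not_square hpos hc4 k hk
    apply int_isSquare_of_rat
    have h2 : (2:ℕ)^k = 2^(k-1)*2 := by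
      rw [← pow_succ]
      congr 1
      omega
    have h3 : ((sseq c k : ℚ)) = ((sseq c k : ℚ) / (c:ℚ)^(2^k)) * ((c:ℚ)^(2^(k-1)))^2 := by
      rw [← pow_mul, ← h2]
      field_simp
    rw [h3]
    exact hsq.mul ⟨(c:ℚ)^(2^(k-1)), by ring⟩

private lemma neg_inv_not_square {c : ℤ} (hc0 : c ≠ 0) (hc4 : c % 4 = 1) (b : ℚ) :
    b^2 ≠ -(1/(c:ℚ)) := by
  have hcq : (c:ℚ) ≠ 0 := Int.cast_ne_zero.mpr hc0
  intro hb
  rcases lt_or_gt_of_ne hc0 with hneg | hpos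
  · have hb0 : b ≠ 0 := by
      intro h
      rw [h] at hb
      norm_num at hb
      exact hcq (by exact_mod_cast hb)
    have h1 : ((-c : ℤ):ℚ) = (1/b)^2 := by
      push_cast
      rw [div_pow, one_pow, hb]
      field_simp
    apply not_isSquare_of_mod4 (z := -c) (Or.inr (by omega))
    apply int_isSquare_of_rat
    rw [h1]
    exact ⟨1/b, by ring⟩
  · have h1 : (0:ℚ) < 1/(c:ℚ) := by positivity
    nlinarith [sq_nonneg b]

/-- If `c ≡ 1 (mod 4)` is a nonzero integer and `f(z) = z² + 1/c ∈ ℚ[z]`,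
then every iterate `fⁿ` (`n ≥ 1`) is irreducible over `ℚ`.
Here `fⁿ` is the `n`-fold composition of `f`, encoded as `(f.comp ·)^[n] X`. -/
theorem stmt0 (c : ℤ) (hc : c ≠ 0) (hmod : c % 4 = 1)
    (f : ℚ[X]) (hf : f = X ^ 2 + C (1 / (c : ℚ))) :
    ∀ n : ℕ, 1 ≤ n → Irreducible ((f.comp ·)^[n] X) := by
  have hcq : (c:ℚ) ≠ 0 := Int.cast_ne_zero.mpr hc
  set a : ℚ := 1/(c:ℚ) with ha
  have hfm : f.Monic := by rw [hf]; exact monic_X_pow_add_C _ (by norm_num)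
  have hfdeg : f.natDegree = 2 := by rw [hf]; exact natDegree_X_pow_add_C
  set F : ℕ → ℚ[X] := fun n => (f.comp ·)^[n] X with hF
  have hFsucc : ∀ n, F (n+1) = f.comp (F n) := fun n => Function.iterate_succ_apply' _ n X
  have hF0 : F 0 = X := rfl
  have hF1 : F 1 = f := by rw [show (1:ℕ) = 0 + 1 from rfl, hFsucc, hF0, comp_X]
  have hFcomm' : ∀ n, f.comp (F n) = (F n).comp f := by
    intro n
    induction n with
    | zero => rw [hF0, comp_X, X_comp]
    | succ n ih =>
      rw [hFsucc n, Polynomial.comp_assoc, ← ih]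
  have hFcomm : ∀ n, F (n+1) = (F n).comp f := fun n => by rw [hFsucc n, hFcomm']
  have hFmonic : ∀ n, (F (n+1)).Monic := by
    intro n
    induction n with
    | zero => rw [hF1]; exact hfm
    | succ n ih =>
      rw [hFcomm (n+1)]
      exact ih.comp hfm (by rw [hfdeg]; norm_num)
  have hFdeg : ∀ n, (F (n+1)).natDegree = 2^(n+1) := by
    intro n
    induction n with
    | zero => rw [hF1, hfdeg]; norm_num
    | succ n ih =>
      rw [hFcomm (n+1), natDegree_comp, ih, hfdeg, ← pow_succ]
  have hfeval0 : f.eval 0 = a := by rw [hf]; simp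
  have heval0 : ∀ n, (F (n+1)).eval 0 = (sseq c n : ℚ) / (c:ℚ)^(2^n) := by
    intro n
    induction n with
    | zero =>
      rw [hF1, hfeval0]
      norm_num [sseq, ha]
    | succ n ih =>
      rw [hFsucc (n+1), eval_comp, ih, bq_rec hc n, hf]
      simp [ha]
  intro n hn
  induction n, hn using Nat.le_induction with
  | base =>
    show Irreducible (F 1)
    rw [hF1, hf]
    have e : (X:ℚ[X])^2 + C a = X^2 - C (-a) := by rw [map_neg, sub_neg_eq_add]
    rw [e]
    exact X_pow_sub_C_irreducible_of_prime Nat.prime_two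
      (fun b => by rw [ha]; exact neg_inv_not_square hc hmod b)
  | succ n hn ih =>
    obtain ⟨m, rfl⟩ : ∃ m, n = m + 1 := ⟨n - 1, by omega⟩
    show Irreducible (F (m+1+1))
    rw [hFcomm (m+1)]
    have hns : ¬ IsSquare ((F (m+1)).eval a) := by
      have h1 : (F (m+1)).eval a = (F (m+2)).eval 0 := by
        rw [hFcomm (m+1), eval_comp, hfeval0]
      rw [h1, heval0 (m+1)]
      exact bq_not_square hc hmod (m+1) (by omega)
    have heven : Even (F (m+1)).natDegree := by
      rw [hFdeg m]
      exact ⟨2^m, by rw [pow_succ]; ring⟩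
    have := capelli (F (m+1)) (hFmonic m) ih heven a hns
    rwa [hf]
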